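/- Let P = MvPolynomial (Fin 4) ℤ with variables x₁, x₂, x₃, x₄, let I be the ideal generated by the elementary symmetric polynomials e₁, e₂, e₃, e₄, and let R = P ⧸ I. Then the classes of the 24 monomials x₁^a·x₂^b·x₃^c with 0 ≤ a ≤ 3, 0 ≤ b ≤ 2, 0 ≤ c ≤ 1 form a basis of R as a ℤ-module; in particular R is a free ℤ-module of rank 24 (this realizes the integral cohomology of the flag manifold SU(4)/T³, whose rank equals the order of the Weyl group S₄). -/

import Mathlib

namespace Stmt9

noncomputable section

/-- The polynomial ring `P = ℤ[x₁, x₂, x₃, x₄]`. -/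
abbrev P := MvPolynomial (Fin 4) ℤ

def x₁ : P := MvPolynomial.X 0
def x₂ : P := MvPolynomial.X 1
def x₃ : P := MvPolynomial.X 2

/-- The ideal generated by the elementary symmetric polynomials `e₁, e₂, e₃, e₄`. -/
def I : Ideal P := Ideal.span
  {MvPolynomial.esymm (Fin 4) ℤ 1, MvPolynomial.esymm (Fin 4) ℤ 2,
    MvPolynomial.esymm (Fin 4) ℤ 3, MvPolynomial.esymm (Fin 4) ℤ 4}

/-- The coinvariant algebra of `S₄`, realizing `H^*(SU(4)/T³; ℤ)`. -/
abbrev R := P ⧸ I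

section Aux

open MvPolynomial Finset

lemma aux_esymm1 : esymm (Fin 4) ℤ 1 = X 0 + X 1 + X 2 + X 3 := by
  rw [esymm_one, Fin.sum_univ_four]

lemma aux_esymm2 : esymm (Fin 4) ℤ 2 =
    X 0*X 1 + X 0*X 2 + X 0*X 3 + X 1*X 2 + X 1*X 3 + X 2*X 3 := by
  rw [esymm, show (powersetCard 2 (univ : Finset (Fin 4))) =
    {{0,1},{0,2},{0,3},{1,2},{1,3},{2,3}} from by decide]
  repeat rw [Finset.sum_insert (by decide)]
  rw [Finset.sum_singleton]
  repeat rw [Finset.prod_insert (by decide)]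
  repeat rw [Finset.prod_singleton]
  ring

lemma aux_esymm3 : esymm (Fin 4) ℤ 3 =
    X 0*X 1*X 2 + X 0*X 1*X 3 + X 0*X 2*X 3 + X 1*X 2*X 3 := by
  rw [esymm, show (powersetCard 3 (univ : Finset (Fin 4))) =
    {{0,1,2},{0,1,3},{0,2,3},{1,2,3}} from by decide]
  repeat rw [Finset.sum_insert (by decide)]
  rw [Finset.sum_singleton]
  repeat rw [Finset.prod_insert (by decide)]
  repeat rw [Finset.prod_singleton]
  ring

lemma aux_esymm4 : esymm (Fin 4) ℤ 4 = X 0*X 1*X 2*X 3 := by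
  rw [esymm, show (powersetCard 4 (univ : Finset (Fin 4))) =
    {{0,1,2,3}} from by decide]
  rw [Finset.sum_singleton]
  repeat rw [Finset.prod_insert (by decide)]
  repeat rw [Finset.prod_singleton]
  ring

lemma aux_e1I : esymm (Fin 4) ℤ 1 ∈ I := Ideal.subset_span (by simp [I])
lemma aux_e2I : esymm (Fin 4) ℤ 2 ∈ I := Ideal.subset_span (by simp [I])
lemma aux_e3I : esymm (Fin 4) ℤ 3 ∈ I := Ideal.subset_span (by simp [I])
lemma aux_e4I : esymm (Fin 4) ℤ 4 ∈ I := Ideal.subset_span (by simp [I])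

lemma aux_comb {c1 c2 c3 c4 : P} :
    c1 * esymm (Fin 4) ℤ 1 + c2 * esymm (Fin 4) ℤ 2 + c3 * esymm (Fin 4) ℤ 3
      + c4 * esymm (Fin 4) ℤ 4 ∈ I :=
  Ideal.add_mem _ (Ideal.add_mem _ (Ideal.add_mem _
      (Ideal.mul_mem_left _ _ aux_e1I) (Ideal.mul_mem_left _ _ aux_e2I))
      (Ideal.mul_mem_left _ _ aux_e3I)) (Ideal.mul_mem_left _ _ aux_e4I)

/-- `x₁⁴ ∈ I`. -/
lemma aux_x14I : (X 0 : P)^4 ∈ I := by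
  have h : (X 0 : P)^4 = (X 0)^3 * esymm (Fin 4) ℤ 1 + (-(X 0)^2) * esymm (Fin 4) ℤ 2
      + (X 0) * esymm (Fin 4) ℤ 3 + (-1) * esymm (Fin 4) ℤ 4 := by
    rw [aux_esymm1, aux_esymm2, aux_esymm3, aux_esymm4]; ring
  rw [h]; exact aux_comb

/-- `h₃(x₁,x₂) ∈ I`. -/
lemma aux_h3I : (X 1 : P)^3 + X 0 * (X 1)^2 + (X 0)^2 * X 1 + (X 0)^3 ∈ I := by
  have h : (X 1 : P)^3 + X 0 * (X 1)^2 + (X 0)^2 * X 1 + (X 0)^3 =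
      ((X 0)^2 + X 0 * X 1 + (X 1)^2) * esymm (Fin 4) ℤ 1
      + (-(X 0 + X 1)) * esymm (Fin 4) ℤ 2
      + 1 * esymm (Fin 4) ℤ 3 + 0 * esymm (Fin 4) ℤ 4 := by
    rw [aux_esymm1, aux_esymm2, aux_esymm3, aux_esymm4]; ring
  rw [h]; exact aux_comb

/-- `h₂(x₁,x₂,x₃) ∈ I`. -/
lemma aux_h2I : (X 2 : P)^2 + (X 0 + X 1) * X 2 + ((X 0)^2 + X 0 * X 1 + (X 1)^2) ∈ I := by
  have h : (X 2 : P)^2 + (X 0 + X 1) * X 2 + ((X 0)^2 + X 0 * X 1 + (X 1)^2) =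
      (X 0 + X 1 + X 2) * esymm (Fin 4) ℤ 1 + (-1) * esymm (Fin 4) ℤ 2
      + 0 * esymm (Fin 4) ℤ 3 + 0 * esymm (Fin 4) ℤ 4 := by
    rw [aux_esymm1, aux_esymm2, aux_esymm3, aux_esymm4]; ring
  rw [h]; exact aux_comb

/-- `e₁ = x₁+x₂+x₃+x₄ ∈ I`, in expanded form. -/
lemma aux_e1I' : (X 0 : P) + X 1 + X 2 + X 3 ∈ I := by rw [← aux_esymm1]; exact aux_e1I

end Aux

section Tower

open Polynomial

/-- `A1 = ℤ[a]/(a⁴)`. -/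
abbrev f1 : Polynomial ℤ := Polynomial.X ^ 4
abbrev A1 := AdjoinRoot f1
def a1 : A1 := AdjoinRoot.root f1

lemma mf1 : f1.Monic := monic_X_pow 4
lemma df1 : f1.natDegree = 4 := natDegree_X_pow 4
lemma ha1 : a1 ^ 4 = 0 := by
  have h := AdjoinRoot.eval₂_root f1
  simpa [a1] using h

/-- `A2 = A1[b]/(h₃(a,b))`. -/
def f2 : Polynomial A1 :=
  Polynomial.X ^ 3 + Polynomial.C a1 * Polynomial.X ^ 2
    + Polynomial.C (a1^2) * Polynomial.X + Polynomial.C (a1^3)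
abbrev A2 := AdjoinRoot f2
def a2 : A2 := AdjoinRoot.root f2
def b1 : A2 := AdjoinRoot.of f2 a1

lemma ev_cond1 : f1.eval₂ (RingHom.id ℤ) 0 = 0 := by
  simp [Polynomial.eval₂_X_pow]

def ev1 : A1 →+* ℤ := AdjoinRoot.lift (RingHom.id ℤ) 0 ev_cond1

instance : Nontrivial A1 := ev1.domain_nontrivial

lemma ev_cond2 : f2.eval₂ (RingHom.id A1) (-a1) = 0 := by
  simp only [f2, Polynomial.eval₂_add, Polynomial.eval₂_mul, Polynomial.eval₂_pow,
    Polynomial.eval₂_X, Polynomial.eval₂_C, RingHom.id_apply]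
  ring

def ev2 : A2 →+* A1 := AdjoinRoot.lift (RingHom.id A1) (-a1) ev_cond2

instance : Nontrivial A2 := ev2.domain_nontrivial

lemma mf2 : f2.Monic := by
  have h : f2 = Polynomial.X ^ 3 + (Polynomial.C a1 * Polynomial.X ^ 2
      + (Polynomial.C (a1^2) * Polynomial.X + Polynomial.C (a1^3))) := by rw [f2]; ring
  rw [h]
  apply Polynomial.monic_X_pow_add
  refine lt_of_le_of_lt (?_ : _ ≤ (2 : WithBot ℕ)) ?_
  · compute_degree
  · exact_mod_cast (by norm_num : (2:ℕ) < 3)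

lemma df2 : f2.natDegree = 3 := by unfold f2; compute_degree!
lemma ha2 : a2^3 + b1 * a2^2 + b1^2 * a2 + b1^3 = 0 := by
  have h := AdjoinRoot.eval₂_root f2
  rw [f2] at h
  simp [a2, b1, eval₂_add, eval₂_mul, eval₂_pow, map_pow] at h
  exact h

/-- `A3 = A2[c]/(h₂(a,b,c))`. -/
def f3 : Polynomial A2 :=
  Polynomial.X ^ 2 + Polynomial.C (b1 + a2) * Polynomial.X
    + Polynomial.C (b1^2 + b1*a2 + a2^2)
abbrev A3 := AdjoinRoot f3
def a3 : A3 := AdjoinRoot.root f3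
def c1 : A3 := AdjoinRoot.of f3 b1
def c2 : A3 := AdjoinRoot.of f3 a2

lemma mf3 : f3.Monic := by
  have h : f3 = Polynomial.X ^ 2 + (Polynomial.C (b1 + a2) * Polynomial.X
      + Polynomial.C (b1^2 + b1*a2 + a2^2) * 1) := by rw [f3]; ring
  rw [h]
  apply Polynomial.monic_X_pow_add
  refine lt_of_le_of_lt (?_ : _ ≤ (1 : WithBot ℕ)) ?_
  · compute_degree
  · exact_mod_cast (by norm_num : (1:ℕ) < 2)

lemma df3 : f3.natDegree = 2 := by unfold f3; compute_degree!
lemma ha3 : a3^2 + (c1 + c2) * a3 + (c1^2 + c1*c2 + c2^2) = 0 := by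
  have h := AdjoinRoot.eval₂_root f3
  rw [f3] at h
  simp [a3, c1, c2, eval₂_add, eval₂_mul, eval₂_pow, map_pow, map_add, map_mul] at h
  exact h

lemma hc1pow4 : c1 ^ 4 = 0 := by
  have : b1 ^ 4 = 0 := by rw [b1, ← map_pow, ha1, map_zero]
  rw [c1, ← map_pow, this, map_zero]

lemma hH3 : c2^3 + c1 * c2^2 + c1^2 * c2 + c1^3 = 0 := by
  have := congrArg (AdjoinRoot.of f3) ha2
  simpa [c1, c2, map_add, map_mul, map_pow] using this

end Tower

section Maps

open MvPolynomial

def v : Fin 4 → A3 := ![c1, c2, a3, -(c1 + c2 + a3)]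

def φ : P →ₐ[ℤ] A3 := aeval v

lemma φ_esymm1 : φ (esymm (Fin 4) ℤ 1) = 0 := by
  rw [aux_esymm1]
  simp only [φ, map_add, MvPolynomial.aeval_X, v, Matrix.cons_val_zero, Matrix.cons_val_one,
    Matrix.head_cons, Matrix.cons_val_two, Matrix.tail_cons, Matrix.cons_val_three]
  ring

lemma φ_esymm2 : φ (esymm (Fin 4) ℤ 2) = 0 := by
  rw [aux_esymm2]
  simp only [φ, map_add, map_mul, MvPolynomial.aeval_X, v, Matrix.cons_val_zero,
    Matrix.cons_val_one, Matrix.head_cons, Matrix.cons_val_two, Matrix.tail_cons,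
    Matrix.cons_val_three]
  linear_combination (-1 : A3) * ha3

lemma φ_esymm3 : φ (esymm (Fin 4) ℤ 3) = 0 := by
  rw [aux_esymm3]
  simp only [φ, map_add, map_mul, MvPolynomial.aeval_X, v, Matrix.cons_val_zero,
    Matrix.cons_val_one, Matrix.head_cons, Matrix.cons_val_two, Matrix.tail_cons,
    Matrix.cons_val_three]
  linear_combination (-(c1+c2)) * ha3 + hH3

lemma φ_esymm4 : φ (esymm (Fin 4) ℤ 4) = 0 := by
  rw [aux_esymm4]
  simp only [φ, map_mul, MvPolynomial.aeval_X, v, Matrix.cons_val_zero,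
    Matrix.cons_val_one, Matrix.head_cons, Matrix.cons_val_two, Matrix.tail_cons,
    Matrix.cons_val_three]
  linear_combination (-(c1*c2)) * ha3 + c1 * hH3 + (-1 : A3) * hc1pow4

lemma φ_vanish : ∀ p ∈ I, φ p = 0 := by
  intro p hp
  have hle : I ≤ RingHom.ker (φ : P →+* A3) := by
    rw [I, Ideal.span_le]
    rintro q hq
    simp only [Set.mem_insert_iff, Set.mem_singleton_iff] at hq
    rcases hq with h | h | h | h <;> subst h <;>
      simp only [SetLike.mem_coe, RingHom.mem_ker]
    · exact φ_esymm1
    · exact φ_esymm2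
    · exact φ_esymm3
    · exact φ_esymm4
  exact hle hp

def ψ : R →ₐ[ℤ] A3 := Ideal.Quotient.liftₐ I φ φ_vanish

lemma ψ_mk (p : P) : ψ (Ideal.Quotient.mk I p) = aeval v p := by
  simp only [ψ, Ideal.Quotient.liftₐ_apply]
  exact Ideal.Quotient.lift_mk I _ _

-- The inverse chain of ring homomorphisms.
lemma hχ1 : f1.eval₂ (algebraMap ℤ R) (Ideal.Quotient.mk I (X 0)) = 0 := by
  rw [show (f1 : Polynomial ℤ) = Polynomial.X ^ 4 from rfl, Polynomial.eval₂_X_pow, ← map_pow,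
    Ideal.Quotient.eq_zero_iff_mem]
  exact aux_x14I

def χ1 : A1 →+* R := AdjoinRoot.lift (algebraMap ℤ R) (Ideal.Quotient.mk I (X 0)) hχ1

lemma χ1_a1 : χ1 a1 = Ideal.Quotient.mk I (X 0) := AdjoinRoot.lift_root hχ1

lemma hχ2 : f2.eval₂ χ1 (Ideal.Quotient.mk I (X 1)) = 0 := by
  rw [f2]
  simp only [Polynomial.eval₂_add, Polynomial.eval₂_mul, Polynomial.eval₂_pow,
    Polynomial.eval₂_X, Polynomial.eval₂_C, map_pow, χ1_a1]
  simp only [← map_pow, ← map_mul, ← map_add]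
  rw [Ideal.Quotient.eq_zero_iff_mem]
  exact aux_h3I

def χ2 : A2 →+* R := AdjoinRoot.lift χ1 (Ideal.Quotient.mk I (X 1)) hχ2

lemma χ2_a2 : χ2 a2 = Ideal.Quotient.mk I (X 1) := AdjoinRoot.lift_root hχ2
lemma χ2_of (y : A1) : χ2 (AdjoinRoot.of f2 y) = χ1 y :=
  RingHom.congr_fun (AdjoinRoot.lift_comp_of hχ2) y
lemma χ2_b1 : χ2 b1 = Ideal.Quotient.mk I (X 0) := by rw [b1, χ2_of, χ1_a1]

lemma hχ3 : f3.eval₂ χ2 (Ideal.Quotient.mk I (X 2)) = 0 := by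
  rw [f3]
  simp only [Polynomial.eval₂_add, Polynomial.eval₂_mul, Polynomial.eval₂_pow,
    Polynomial.eval₂_X, Polynomial.eval₂_C, map_add, map_mul, map_pow, χ2_a2, χ2_b1]
  simp only [← map_pow, ← map_mul, ← map_add]
  rw [Ideal.Quotient.eq_zero_iff_mem]
  exact aux_h2I

def χ3 : A3 →+* R := AdjoinRoot.lift χ2 (Ideal.Quotient.mk I (X 2)) hχ3

lemma χ3_a3 : χ3 a3 = Ideal.Quotient.mk I (X 2) := AdjoinRoot.lift_root hχ3
lemma χ3_of (y : A2) : χ3 (AdjoinRoot.of f3 y) = χ2 y :=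
  RingHom.congr_fun (AdjoinRoot.lift_comp_of hχ3) y
lemma χ3_c1 : χ3 c1 = Ideal.Quotient.mk I (X 0) := by rw [c1, χ3_of, χ2_b1]
lemma χ3_c2 : χ3 c2 = Ideal.Quotient.mk I (X 1) := by rw [c2, χ3_of, χ2_a2]

lemma χψ : ∀ r : R, χ3 (ψ r) = r := by
  have key : (χ3.comp ((ψ : R →+* A3).comp (Ideal.Quotient.mk I))) = Ideal.Quotient.mk I := by
    apply MvPolynomial.ringHom_ext
    · intro r
      have h := RingHom.ext_int
        ((χ3.comp ((ψ : R →+* A3).comp (Ideal.Quotient.mk I))).comp (MvPolynomial.C))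
        ((Ideal.Quotient.mk I).comp (MvPolynomial.C))
      exact RingHom.congr_fun h r
    · intro i
      simp only [RingHom.comp_apply]
      have hmk : (ψ : R →+* A3) (Ideal.Quotient.mk I (X i)) = v i := by
        show ψ (Ideal.Quotient.mk I (X i)) = v i
        rw [ψ_mk, MvPolynomial.aeval_X]
      rw [hmk]
      fin_cases i
      · exact χ3_c1
      · exact χ3_c2
      · exact χ3_a3
      · show χ3 (-(c1 + c2 + a3)) = Ideal.Quotient.mk I (X 3)
        rw [map_neg, map_add, map_add, χ3_c1, χ3_c2, χ3_a3]
        have h0 : Ideal.Quotient.mk I ((X 0 : P) + X 1 + X 2 + X 3) = 0 :=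
          Ideal.Quotient.eq_zero_iff_mem.2 aux_e1I'
        simp only [map_add] at h0
        linear_combination -h0
  intro r
  obtain ⟨p, rfl⟩ := Ideal.Quotient.mk_surjective (I := I) r
  exact RingHom.congr_fun key p

lemma ψ_inj : Function.Injective ψ := Function.LeftInverse.injective χψ

/-- Induction principle: a subring of `AdjoinRoot g` containing the image of the base
ring and the root is everything. -/
lemma adjoinRoot_subring_ind {S : Type*} [CommRing S] (g : Polynomial S)
    (s : Subring (AdjoinRoot g)) (h0 : ∀ x : S, AdjoinRoot.of g x ∈ s)
    (h1 : AdjoinRoot.root g ∈ s) : ∀ y, y ∈ s := by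
  intro y
  obtain ⟨p, rfl⟩ := AdjoinRoot.mk_surjective y
  induction p using Polynomial.induction_on' with
  | add p q hp hq => rw [map_add]; exact s.add_mem hp hq
  | monomial n a =>
    rw [← Polynomial.C_mul_X_pow_eq_monomial, map_mul, map_pow]
    have hC : AdjoinRoot.mk g (Polynomial.C a) = AdjoinRoot.of g a := rfl
    have hX : AdjoinRoot.mk g Polynomial.X = AdjoinRoot.root g := rfl
    rw [hC, hX]
    exact s.mul_mem (h0 a) (s.pow_mem h1 n)

lemma ψ_surj : Function.Surjective ψ := by
  intro y
  have h1 : ∀ z : A1, AdjoinRoot.of f3 (AdjoinRoot.of f2 z) ∈ (ψ : R →+* A3).range := by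
    intro z
    have hmem := adjoinRoot_subring_ind f1
      ((((ψ : R →+* A3).range).comap (AdjoinRoot.of f3)).comap (AdjoinRoot.of f2))
      (fun n => by
        rw [eq_intCast (AdjoinRoot.of f1) n]
        exact intCast_mem _ n)
      (by
        simp only [Subring.mem_comap]
        refine RingHom.mem_range.mpr ⟨Ideal.Quotient.mk I (X 0), ?_⟩
        have h := ψ_mk (X 0)
        rw [MvPolynomial.aeval_X] at h
        exact h) z
    simpa only [Subring.mem_comap] using hmem
  have h2 : ∀ x : A2, AdjoinRoot.of f3 x ∈ (ψ : R →+* A3).range := by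
    intro x
    have hmem := adjoinRoot_subring_ind f2 (((ψ : R →+* A3).range).comap (AdjoinRoot.of f3))
      (fun z => by simpa only [Subring.mem_comap] using h1 z)
      (by
        simp only [Subring.mem_comap]
        refine RingHom.mem_range.mpr ⟨Ideal.Quotient.mk I (X 1), ?_⟩
        have h := ψ_mk (X 1)
        rw [MvPolynomial.aeval_X] at h
        exact h) x
    simpa only [Subring.mem_comap] using hmem
  have h3 : y ∈ (ψ : R →+* A3).range :=
    adjoinRoot_subring_ind f3 ((ψ : R →+* A3).range) h2
      (RingHom.mem_range.mpr ⟨Ideal.Quotient.mk I (X 2), by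
        have h := ψ_mk (X 2)
        rw [MvPolynomial.aeval_X] at h
        exact h⟩) y
  obtain ⟨r, hr⟩ := RingHom.mem_range.mp h3
  exact ⟨r, hr⟩

/-- The algebra isomorphism `R ≃ A3`. -/
def eIso : R ≃ₐ[ℤ] A3 := AlgEquiv.ofBijective ψ ⟨ψ_inj, ψ_surj⟩

lemma eIso_apply (r : R) : eIso r = ψ r := rfl

end Maps

section BasisSection

open Polynomial

def B1 : Module.Basis (Fin 4) ℤ A1 :=
  ((AdjoinRoot.powerBasis' mf1).basis).reindex (finCongr (by rw [AdjoinRoot.powerBasis'_dim, df1]))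

def B2 : Module.Basis (Fin 3) A1 A2 :=
  ((AdjoinRoot.powerBasis' mf2).basis).reindex (finCongr (by rw [AdjoinRoot.powerBasis'_dim, df2]))

def B3 : Module.Basis (Fin 2) A2 A3 :=
  ((AdjoinRoot.powerBasis' mf3).basis).reindex (finCongr (by rw [AdjoinRoot.powerBasis'_dim, df3]))

lemma B1_apply (i : Fin 4) : B1 i = a1 ^ (i : ℕ) := by
  rw [B1, Module.Basis.reindex_apply, PowerBasis.basis_eq_pow]
  simp [a1]

lemma B2_apply (i : Fin 3) : B2 i = a2 ^ (i : ℕ) := by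
  rw [B2, Module.Basis.reindex_apply, PowerBasis.basis_eq_pow]
  simp [a2]

lemma B3_apply (i : Fin 2) : B3 i = a3 ^ (i : ℕ) := by
  rw [B3, Module.Basis.reindex_apply, PowerBasis.basis_eq_pow]
  simp [a3]

/-- The monomial basis of `A3` over `ℤ`. -/
def BB : Module.Basis (Fin 4 × Fin 3 × Fin 2) ℤ A3 := B1.smulTower (B2.smulTower B3)

lemma BB_apply (i : Fin 4 × Fin 3 × Fin 2) :
    BB i = c1 ^ (i.1 : ℕ) * c2 ^ (i.2.1 : ℕ) * a3 ^ (i.2.2 : ℕ) := by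
  obtain ⟨i, j, k⟩ := i
  rw [BB, Module.Basis.smulTower_apply, Module.Basis.smulTower_apply, B1_apply, B2_apply, B3_apply]
  rw [Algebra.smul_def, Algebra.smul_def]
  rw [IsScalarTower.algebraMap_apply A1 A2 A3]
  rw [AdjoinRoot.algebraMap_eq, AdjoinRoot.algebraMap_eq, map_pow, map_pow, map_pow]
  rw [show AdjoinRoot.of f3 (AdjoinRoot.of f2 a1) = c1 from rfl,
    show AdjoinRoot.of f3 a2 = c2 from rfl]
  ring

end BasisSection

/-- The classes of the 24 monomials `x₁^a·x₂^b·x₃^c`, `0 ≤ a ≤ 3`, `0 ≤ b ≤ 2`,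
`0 ≤ c ≤ 1`, form a basis of `R` as a `ℤ`-module; in particular `R` is free of
rank `24 = |S₄|`. -/
theorem basis_monomials :
    (∃ b : Module.Basis (Fin 4 × Fin 3 × Fin 2) ℤ R,
      ∀ i : Fin 4 × Fin 3 × Fin 2,
        b i = Ideal.Quotient.mk I
          (x₁ ^ (i.1 : ℕ) * x₂ ^ (i.2.1 : ℕ) * x₃ ^ (i.2.2 : ℕ))) ∧
    Module.Free ℤ R ∧ Module.finrank ℤ R = 24 := by
  classical
  set b : Module.Basis (Fin 4 × Fin 3 × Fin 2) ℤ R := BB.map eIso.symm.toLinearEquiv with hb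
  have hbi : ∀ i : Fin 4 × Fin 3 × Fin 2,
      b i = Ideal.Quotient.mk I
        (x₁ ^ (i.1 : ℕ) * x₂ ^ (i.2.1 : ℕ) * x₃ ^ (i.2.2 : ℕ)) := by
    intro i
    rw [hb, Module.Basis.map_apply]
    show eIso.symm (BB i) = _
    rw [AlgEquiv.symm_apply_eq, eIso_apply, x₁, x₂, x₃, ψ_mk]
    simp only [map_mul, map_pow, MvPolynomial.aeval_X, BB_apply]
    rfl
  refine ⟨⟨b, hbi⟩, Module.Free.of_basis b, ?_⟩
  rw [Module.finrank_eq_card_basis b]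
  simp

end

end Stmt9
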